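/- Assume a₂t² + b₂t + c₂ > 0 for all t ∈ ℝ and d̂ > 0. Then Δ = ê² − 4d̂f̂ > 0, and letting t_g = (−ê − √Δ)/(2d̂) and t_s = (−ê + √Δ)/(2d̂) (so t_g < t_s), the function R is strictly increasing on (−∞, t_g], strictly decreasing on [t_g, t_s], and strictly increasing on [t_s, ∞); in particular t_g is a local maximizer and t_s a local minimizer of R. -/

import Mathlib

set_option maxHeartbeats 1000000


/-- Monotonicity of `R(t) = (a₁t²+b₁t+c₁)/(a₂t²+b₂t+c₂)` when `d̂ > 0`: the
discriminant `Δ = ê² − 4d̂f̂` is positive and, with `t_g = (−ê−√Δ)/(2d̂)` and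
`t_s = (−ê+√Δ)/(2d̂)`, `R` is strictly increasing on `(−∞, t_g]`, strictly decreasing on
`[t_g, t_s]`, and strictly increasing on `[t_s, ∞)`; so `t_g` is a local maximizer and
`t_s` a local minimizer. -/
theorem stmt11 (a₁ b₁ c₁ a₂ b₂ c₂ : ℝ)
    (hden : ∀ t : ℝ, 0 < a₂ * t ^ 2 + b₂ * t + c₂)
    (R : ℝ → ℝ)
    (hR : R = fun t => (a₁ * t ^ 2 + b₁ * t + c₁) / (a₂ * t ^ 2 + b₂ * t + c₂))
    (dhat ehat fhat : ℝ)
    (hd : dhat = a₁ * b₂ - a₂ * b₁)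
    (he : ehat = 2 * (a₁ * c₂ - a₂ * c₁))
    (hf : fhat = b₁ * c₂ - b₂ * c₁)
    (hdpos : 0 < dhat)
    (Δ : ℝ) (hΔdef : Δ = ehat ^ 2 - 4 * dhat * fhat)
    (tg ts : ℝ)
    (htg : tg = (-ehat - Real.sqrt Δ) / (2 * dhat))
    (hts : ts = (-ehat + Real.sqrt Δ) / (2 * dhat)) :
    0 < Δ ∧ tg < ts ∧
    StrictMonoOn R (Set.Iic tg) ∧ StrictAntiOn R (Set.Icc tg ts) ∧
    StrictMonoOn R (Set.Ici ts) ∧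
    IsLocalMax R tg ∧ IsLocalMin R ts := by
  have hc₂ : 0 < c₂ := by have := hden 0; nlinarith
  -- a₂ > 0
  have ha₂ : 0 < a₂ := by
    rcases lt_trichotomy a₂ 0 with h | h | h
    · exfalso
      have hna : 0 < -a₂ := by linarith
      obtain ⟨t, ht⟩ : ∃ t : ℝ, t = (|b₂| + c₂ + 1) / (-a₂) + 1 := ⟨_, rfl⟩
      have ht1 : 1 ≤ t := by
        rw [ht]
        have : 0 ≤ (|b₂| + c₂ + 1) / (-a₂) := by positivity
        linarith
      have hat : a₂ * t = -(|b₂| + c₂ + 1) + a₂ := by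
        rw [ht]
        field_simp [h.ne]
      have hb : b₂ ≤ |b₂| := le_abs_self b₂
      have h2 : a₂ * t + b₂ ≤ a₂ - c₂ - 1 := by linarith
      have h3 : t * (a₂ * t + b₂) ≤ a₂ * t + b₂ := by
        nlinarith [mul_nonneg (by linarith : (0:ℝ) ≤ t - 1) (by linarith : (0:ℝ) ≤ -(a₂ * t + b₂))]
      have := hden t
      nlinarith
    · exfalso
      rcases eq_or_ne b₂ 0 with hb | hb
      · rw [hd, h, hb] at hdpos; simp at hdpos
      · have := hden (-(c₂ + 1) / b₂)
        rw [h] at this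
        have hx : b₂ * (-(c₂ + 1) / b₂) = -(c₂ + 1) := by field_simp
        nlinarith
    · exact h
  -- discriminant of denominator
  have hdisc : b₂ ^ 2 < 4 * a₂ * c₂ := by
    have h := hden (-b₂ / (2 * a₂))
    have hx : a₂ * (-b₂ / (2 * a₂)) ^ 2 + b₂ * (-b₂ / (2 * a₂)) + c₂
        = (4 * a₂ * c₂ - b₂ ^ 2) / (4 * a₂) := by
      field_simp
      ring
    rw [hx] at h
    have := mul_pos h (by positivity : (0:ℝ) < 4 * a₂)
    rw [div_mul_cancel₀] at this
    · linarith
    · positivity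
  -- Δ > 0 via the identity a₂² Δ = (a₂ ê − b₂ d̂)² + d̂² (4a₂c₂ − b₂²)
  have key : a₂ ^ 2 * Δ = (a₂ * ehat - b₂ * dhat) ^ 2 + dhat ^ 2 * (4 * a₂ * c₂ - b₂ ^ 2) := by
    rw [hΔdef, hd, he, hf]; ring
  have hΔ : 0 < Δ := by
    have h1 : 0 < a₂ ^ 2 * Δ := by
      have h2 : 0 < dhat ^ 2 * (4 * a₂ * c₂ - b₂ ^ 2) :=
        mul_pos (pow_pos hdpos 2) (by linarith)
      nlinarith [sq_nonneg (a₂ * ehat - b₂ * dhat)]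
    by_contra hc
    push_neg at hc
    nlinarith [mul_nonneg (sq_nonneg a₂) (neg_nonneg.mpr hc)]
  have hs : 0 < Real.sqrt Δ := Real.sqrt_pos.mpr hΔ
  have hsq : Real.sqrt Δ ^ 2 = ehat ^ 2 - 4 * dhat * fhat := by
    rw [Real.sq_sqrt hΔ.le, hΔdef]
  have hd0 : dhat ≠ 0 := hdpos.ne'
  have hlt : tg < ts := by
    rw [htg, hts, div_lt_div_iff₀ (by positivity) (by positivity)]
    nlinarith
  -- Vieta
  have hsum : dhat * (tg + ts) = -ehat := by
    rw [htg, hts]; field_simp; ring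
  have hprod : dhat * (tg * ts) = fhat := by
    rw [htg, hts]; field_simp; nlinarith [hsq]
  have hq : ∀ t : ℝ, dhat * t ^ 2 + ehat * t + fhat = dhat * (t - tg) * (t - ts) := by
    intro t
    have : dhat * (t - tg) * (t - ts)
        = dhat * t ^ 2 - (dhat * (tg + ts)) * t + dhat * (tg * ts) := by ring
    rw [this, hsum, hprod]; ring
  -- derivative of R
  have hne : ∀ t : ℝ, a₂ * t ^ 2 + b₂ * t + c₂ ≠ 0 := fun t => (hden t).ne'
  have hpoly : ∀ (a b c : ℝ) (t : ℝ),
      HasDerivAt (fun x : ℝ => a * x ^ 2 + b * x + c) (2 * a * t + b) t := by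
    intro a b c t
    have h := (((hasDerivAt_pow 2 t).const_mul a).add ((hasDerivAt_id t).const_mul b)).add_const c
    refine h.congr_deriv ?_
    push_cast
    ring
  have hderiv : ∀ t : ℝ, HasDerivAt R
      ((dhat * t ^ 2 + ehat * t + fhat) / (a₂ * t ^ 2 + b₂ * t + c₂) ^ 2) t := by
    intro t
    have h := (hpoly a₁ b₁ c₁ t).div (hpoly a₂ b₂ c₂ t) (hne t)
    rw [hR]
    have hnum : dhat * t ^ 2 + ehat * t + fhat
        = (2 * a₁ * t + b₁) * (a₂ * t ^ 2 + b₂ * t + c₂)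
          - (a₁ * t ^ 2 + b₁ * t + c₁) * (2 * a₂ * t + b₂) := by
      rw [hd, he, hf]; ring
    rw [hnum]
    exact h
  have hcont : Continuous R := by
    have : Differentiable ℝ R := fun t => (hderiv t).differentiableAt
    exact this.continuous
  have hderiv' : ∀ t : ℝ, deriv R t
      = dhat * (t - tg) * (t - ts) / (a₂ * t ^ 2 + b₂ * t + c₂) ^ 2 := by
    intro t
    rw [(hderiv t).deriv, hq t]
  -- monotonicity pieces
  have hmono1 : StrictMonoOn R (Set.Iic tg) := by
    apply strictMonoOn_of_deriv_pos (convex_Iic tg) hcont.continuousOn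
    intro x hx
    rw [interior_Iic] at hx
    rw [hderiv' x]
    apply div_pos
    · have hx1 : x < tg := hx
      have h2 : 0 < dhat * (tg - x) * (ts - x) :=
        mul_pos (mul_pos hdpos (by linarith)) (by linarith)
      nlinarith
    · exact pow_pos (hden x) 2
  have hanti : StrictAntiOn R (Set.Icc tg ts) := by
    apply strictAntiOn_of_deriv_neg (convex_Icc tg ts) hcont.continuousOn
    intro x hx
    rw [interior_Icc] at hx
    rw [hderiv' x]
    apply div_neg_of_neg_of_pos
    · have h2 : 0 < dhat * (x - tg) * (ts - x) :=
        mul_pos (mul_pos hdpos (by linarith [hx.1])) (by linarith [hx.2])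
      nlinarith
    · exact pow_pos (hden x) 2
  have hmono2 : StrictMonoOn R (Set.Ici ts) := by
    apply strictMonoOn_of_deriv_pos (convex_Ici ts) hcont.continuousOn
    intro x hx
    rw [interior_Ici] at hx
    rw [hderiv' x]
    apply div_pos
    · have hx1 : ts < x := hx
      exact mul_pos (mul_pos hdpos (by linarith)) (by linarith)
    · exact pow_pos (hden x) 2
  -- local max / min
  have hmax : IsLocalMax R tg := by
    filter_upwards [Icc_mem_nhds (by linarith : tg - 1 < tg) hlt] with x hx
    rcases le_total x tg with h | h
    · exact hmono1.monotoneOn (Set.mem_Iic.mpr h) (Set.mem_Iic.mpr le_rfl) h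
    · exact hanti.antitoneOn ⟨le_refl tg, hlt.le⟩ ⟨h, hx.2⟩ h
  have hmin : IsLocalMin R ts := by
    filter_upwards [Icc_mem_nhds hlt (by linarith : ts < ts + 1)] with x hx
    rcases le_total x ts with h | h
    · exact hanti.antitoneOn ⟨hx.1, h⟩ ⟨hlt.le, le_refl ts⟩ h
    · exact hmono2.monotoneOn (Set.mem_Ici.mpr le_rfl) (Set.mem_Ici.mpr h) h
  exact ⟨hΔ, hlt, hmono1, hanti, hmono2, hmax, hmin⟩
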